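/- For every ε > 0 the complex improper integrals K₋(ε) = lim_{A→∞} ∫_{−A}^0 e^{iω²/2}/(ω − iε) dω and K₊(ε) = lim_{A→∞} ∫_0^A e^{−iω²/2}/(ω − iε) dω exist, and lim_{ε→0+} (K₋(ε) + K₊(ε)) = iπ/2. -/

import Mathlib

open Real Filter Complex MeasureTheory Set Topology

noncomputable section FresnelAux

/-- integrand of `K₊`. -/
def vv (ω : ℝ) : ℂ := Complex.exp (-(Complex.I * (ω:ℂ)^2 / 2))

def gg (ε ω : ℝ) : ℂ := (ω:ℂ) * ((ω:ℂ) - Complex.I * ε)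

def uu (ε ω : ℝ) : ℂ := Complex.I / gg ε ω

def uu' (ε ω : ℝ) : ℂ := -(Complex.I * ((2*(ω:ℂ) - Complex.I*ε) / (gg ε ω)^2))

def ww (ε ω : ℝ) : ℂ := -(uu' ε ω * vv ω)

def fpl (ε ω : ℝ) : ℂ := vv ω / ((ω:ℂ) - Complex.I*ε)

lemma denom_ne {ε : ℝ} (hε : ε ≠ 0) (ω : ℝ) : (ω:ℂ) - Complex.I * ε ≠ 0 := by
  intro h
  have h2 := congrArg Complex.im h
  simp at h2
  exact hε h2

lemma norm_vv (ω : ℝ) : ‖vv ω‖ = 1 := by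
  rw [vv, Complex.norm_exp]
  simp [← Complex.ofReal_pow]

lemma gg_ne {ε : ℝ} (hε : ε ≠ 0) {ω : ℝ} (hω : ω ≠ 0) : gg ε ω ≠ 0 :=
  mul_ne_zero (Complex.ofReal_ne_zero.2 hω) (denom_ne hε ω)

lemma continuous_vv : Continuous vv := by
  apply Complex.continuous_exp.comp
  fun_prop

lemma continuous_fpl {ε : ℝ} (hε : ε ≠ 0) : Continuous (fpl ε) := by
  apply continuous_vv.div (by fun_prop) (denom_ne hε)

lemma hasDerivAt_ofReal (ω : ℝ) : HasDerivAt (fun x : ℝ => ((x:ℝ):ℂ)) 1 ω :=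
  (hasDerivAt_id ω).ofReal_comp

lemma hasDerivAt_vv (ω : ℝ) : HasDerivAt vv (-Complex.I * ω * vv ω) ω := by
  have h1 : HasDerivAt (fun x : ℝ => -(Complex.I * (x:ℂ)^2 / 2)) (-Complex.I * ω) ω := by
    have h2 : (fun x : ℝ => -(Complex.I * (x:ℂ)^2 / 2))
        = fun x : ℝ => -(Complex.I/2) * ((x:ℂ) * (x:ℂ)) := by funext x; ring
    rw [h2]
    have := ((hasDerivAt_ofReal ω).mul (hasDerivAt_ofReal ω)).const_mul (-(Complex.I/2))
    refine this.congr_deriv ?_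
    push_cast; ring
  have := h1.cexp
  refine this.congr_deriv ?_
  rw [vv]; ring

lemma hasDerivAt_uu {ε : ℝ} (hε : ε ≠ 0) {ω : ℝ} (hω : ω ≠ 0) :
    HasDerivAt (uu ε) (uu' ε ω) ω := by
  have hg : HasDerivAt (gg ε) (2*(ω:ℂ) - Complex.I*ε) ω := by
    have h0 := hasDerivAt_ofReal ω
    have := h0.mul (h0.sub_const (Complex.I * ε))
    refine this.congr_deriv ?_
    ring
  have := (hasDerivAt_const ω Complex.I).div hg (gg_ne hε hω)
  have h2 : (fun ω' : ℝ => Complex.I / gg ε ω') = uu ε := rfl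
  refine this.congr_deriv ?_
  rw [uu']
  field_simp
  ring


lemma denom_ne' {ω : ℝ} (hω : ω ≠ 0) (ε : ℝ) : (ω:ℂ) - Complex.I * ε ≠ 0 := by
  intro h
  have h2 := congrArg Complex.re h
  simp at h2
  exact hω h2

lemma gg_ne' {ω : ℝ} (hω : ω ≠ 0) (ε : ℝ) : gg ε ω ≠ 0 :=
  mul_ne_zero (Complex.ofReal_ne_zero.2 hω) (denom_ne' hω ε)

lemma continuousOn_uu' (ε : ℝ) : ContinuousOn (uu' ε) {ω : ℝ | ω ≠ 0} := by
  apply ContinuousOn.neg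
  apply ContinuousOn.mul continuousOn_const
  apply ContinuousOn.div (by fun_prop)
  · apply (continuousOn_of_forall_continuousAt (fun ω _ => ?_)).pow
    have : Continuous (gg ε) := by unfold gg; fun_prop
    exact this.continuousAt
  · exact fun ω hω => pow_ne_zero 2 (gg_ne' hω ε)

lemma continuousOn_ww (ε : ℝ) : ContinuousOn (ww ε) {ω : ℝ | ω ≠ 0} :=
  ((continuousOn_uu' ε).mul (continuous_vv.continuousOn)).neg

lemma norm_ww_le (ε : ℝ) {ω : ℝ} (hω : 1 ≤ ω) :
    ‖ww ε ω‖ ≤ (2 + |ε|) * ω ^ (-3 : ℝ) := by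
  have hω0 : (0:ℝ) < ω := lt_of_lt_of_le one_pos hω
  have hvv := norm_vv ω
  have hnum : ‖2*(ω:ℂ) - Complex.I*ε‖ ≤ (2 + |ε|) * ω := by
    calc ‖2*(ω:ℂ) - Complex.I*ε‖ ≤ ‖2*(ω:ℂ)‖ + ‖Complex.I*(ε:ℂ)‖ := norm_sub_le _ _
    _ = 2 * |ω| + |ε| := by
        simp [map_mul]
    _ ≤ 2 * ω + |ε| * ω := by
        rw [abs_of_pos hω0]
        nlinarith [abs_nonneg ε]
    _ = (2 + |ε|) * ω := by ring
  have hgg : ω * ω ≤ ‖gg ε ω‖ := by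
    rw [gg, norm_mul]
    have h1 : ‖((ω:ℝ):ℂ)‖ = ω := by
      rw [Complex.norm_real, Real.norm_eq_abs, abs_of_pos hω0]
    have h2 : ω ≤ ‖(ω:ℂ) - Complex.I*ε‖ := by
      have := Complex.abs_re_le_norm ((ω:ℂ) - Complex.I*ε)
      simp only [Complex.sub_re, Complex.ofReal_re, Complex.mul_re, Complex.I_re,
        Complex.ofReal_im, Complex.I_im, Complex.ofReal_re] at this
      calc ω = |ω| := (abs_of_pos hω0).symm
      _ ≤ _ := by simpa using this
    calc ω * ω = ω * ω := rfl
    _ ≤ ‖((ω:ℝ):ℂ)‖ * ‖(ω:ℂ) - Complex.I*ε‖ := by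
        rw [h1]; exact mul_le_mul_of_nonneg_left h2 hω0.le
  have hnormww : ‖ww ε ω‖ = ‖2*(ω:ℂ) - Complex.I*ε‖ / ‖gg ε ω‖^2 := by
    rw [ww, uu', norm_neg, norm_mul, hvv, mul_one, norm_neg, norm_mul, norm_div,
      Complex.norm_I, one_mul, norm_pow]
  rw [hnormww]
  have hggpos : 0 < ‖gg ε ω‖ := lt_of_lt_of_le (by nlinarith) hgg
  have hstep : ‖2*(ω:ℂ) - Complex.I*ε‖ / ‖gg ε ω‖^2 ≤ ((2 + |ε|) * ω) / (ω*ω)^2 := by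
    apply div_le_div₀ (by positivity) hnum (by positivity)
    exact pow_le_pow_left₀ (by positivity) hgg 2
  refine hstep.trans (le_of_eq ?_)
  rw [Real.rpow_neg hω0.le, show (3:ℝ) = ((3:ℕ):ℝ) by norm_num, Real.rpow_natCast]
  field_simp

lemma integrableOn_ww (ε : ℝ) : IntegrableOn (ww ε) (Ioi (1:ℝ)) := by
  apply Integrable.mono' (((integrableOn_Ioi_rpow_of_lt (by norm_num : (-3:ℝ) < -1)
      one_pos)).const_mul (2 + |ε|))
  · exact ((continuousOn_ww ε).mono (fun x hx => ne_of_gt (lt_trans one_pos hx))).aestronglyMeasurable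
      measurableSet_Ioi
  · exact (ae_restrict_iff' measurableSet_Ioi).2 (Eventually.of_forall
      (fun ω hω => norm_ww_le ε (le_of_lt hω)))

def KP (ε : ℝ) : ℂ := (∫ ω in (0:ℝ)..1, fpl ε ω) - uu ε 1 * vv 1 + ∫ ω in Set.Ioi (1:ℝ), ww ε ω

lemma tendsto_uv_zero (ε : ℝ) : Tendsto (fun A : ℝ => uu ε A * vv A) atTop (𝓝 0) := by
  apply squeeze_zero_norm' (t₀ := atTop) ?_ tendsto_inv_atTop_zero
  filter_upwards [eventually_ge_atTop (1:ℝ)] with A hA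
  have hA0 : (0:ℝ) < A := lt_of_lt_of_le one_pos hA
  have hgg : A * A ≤ ‖gg ε A‖ := by
    rw [gg, norm_mul]
    have h1 : ‖((A:ℝ):ℂ)‖ = A := by
      rw [Complex.norm_real, Real.norm_eq_abs, abs_of_pos hA0]
    have h2 : A ≤ ‖(A:ℂ) - Complex.I*ε‖ := by
      have := Complex.abs_re_le_norm ((A:ℂ) - Complex.I*ε)
      simp only [Complex.sub_re, Complex.ofReal_re, Complex.mul_re, Complex.I_re,
        Complex.ofReal_im, Complex.I_im, Complex.ofReal_re] at this
      calc A = |A| := (abs_of_pos hA0).symm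
      _ ≤ _ := by simpa using this
    rw [h1]
    exact mul_le_mul_of_nonneg_left h2 hA0.le
  simp only [uu]
  rw [norm_mul, norm_vv, mul_one, norm_div, Complex.norm_I]
  rw [div_le_iff₀ (lt_of_lt_of_le (by nlinarith) hgg), inv_mul_eq_div, le_div_iff₀ hA0]
  nlinarith

lemma part_Kp {ε : ℝ} (hε : 0 < ε) :
    Tendsto (fun A : ℝ => ∫ ω in (0:ℝ)..A, fpl ε ω) atTop (𝓝 (KP ε)) := by
  have key : ∀ A : ℝ, 1 ≤ A → (∫ ω in (0:ℝ)..A, fpl ε ω)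
      = ((∫ ω in (0:ℝ)..1, fpl ε ω) - uu ε 1 * vv 1 + ∫ ω in (1:ℝ)..A, ww ε ω)
        + uu ε A * vv A := by
    intro A hA
    have huIcc : uIcc (1:ℝ) A = Icc 1 A := uIcc_of_le hA
    have hmem : ∀ x ∈ uIcc (1:ℝ) A, x ≠ 0 := by
      intro x hx
      rw [huIcc] at hx
      exact ne_of_gt (lt_of_lt_of_le one_pos hx.1)
    have hiww : IntervalIntegrable (ww ε) volume 1 A := by
      apply ContinuousOn.intervalIntegrable
      exact (continuousOn_ww ε).mono hmem
    have hiuu' : IntervalIntegrable (uu' ε) volume 1 A := by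
      apply ContinuousOn.intervalIntegrable
      exact (continuousOn_uu' ε).mono hmem
    have hivv' : IntervalIntegrable (fun ω : ℝ => -Complex.I * ω * vv ω) volume 1 A := by
      apply Continuous.intervalIntegrable
      exact (continuous_const.mul Complex.continuous_ofReal).mul continuous_vv
    have hibp := intervalIntegral.integral_mul_deriv_eq_deriv_mul
      (u := uu ε) (v := vv) (u' := uu' ε) (v' := fun ω : ℝ => -Complex.I * ω * vv ω)
      (a := 1) (b := A)
      (fun x hx => hasDerivAt_uu (ne_of_gt hε) (hmem x hx))
      (fun x hx => hasDerivAt_vv x) hiuu' hivv'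
    have hcongr : (∫ ω in (1:ℝ)..A, fpl ε ω)
        = ∫ ω in (1:ℝ)..A, uu ε ω * (-Complex.I * ω * vv ω) := by
      apply intervalIntegral.integral_congr
      intro x hx
      have hx0 := hmem x hx
      simp only [fpl, uu, gg]
      have d1 := denom_ne' hx0 ε
      have d2 : (x:ℂ) ≠ 0 := Complex.ofReal_ne_zero.2 hx0
      rw [div_mul_eq_mul_div, div_eq_div_iff d1 (mul_ne_zero d2 d1)]
      ring_nf
      rw [show Complex.I^3 = -Complex.I from by
        rw [(by norm_num : 3 = 2 + 1), pow_add, Complex.I_sq]; ring]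
      rw [Complex.I_sq]
      ring
    have hsplit : (∫ ω in (0:ℝ)..A, fpl ε ω)
        = (∫ ω in (0:ℝ)..1, fpl ε ω) + ∫ ω in (1:ℝ)..A, fpl ε ω :=
      (intervalIntegral.integral_add_adjacent_intervals
        ((continuous_fpl (ne_of_gt hε)).intervalIntegrable _ _)
        ((continuous_fpl (ne_of_gt hε)).intervalIntegrable _ _)).symm
    have hwwint : (∫ ω in (1:ℝ)..A, ww ε ω) = -∫ ω in (1:ℝ)..A, uu' ε ω * vv ω := by
      rw [← intervalIntegral.integral_neg]
      apply intervalIntegral.integral_congr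
      intro x _
      rw [ww]
    rw [hsplit, hcongr, hibp, hwwint]
    ring
  have htend : Tendsto (fun A : ℝ =>
      ((∫ ω in (0:ℝ)..1, fpl ε ω) - uu ε 1 * vv 1 + ∫ ω in (1:ℝ)..A, ww ε ω)
        + uu ε A * vv A) atTop (𝓝 (KP ε)) := by
    have h1 : Tendsto (fun A : ℝ => ∫ ω in (1:ℝ)..A, ww ε ω) atTop
        (𝓝 (∫ ω in Set.Ioi (1:ℝ), ww ε ω)) :=
      intervalIntegral_tendsto_integral_Ioi 1 (integrableOn_ww ε) tendsto_id
    have h2 := ((tendsto_const_nhds (x := (∫ ω in (0:ℝ)..1, fpl ε ω) - uu ε 1 * vv 1)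
        (f := atTop)).add h1).add (tendsto_uv_zero ε)
    rw [add_zero] at h2
    exact h2
  apply htend.congr'
  filter_upwards [eventually_ge_atTop (1:ℝ)] with A hA
  exact (key A hA).symm


lemma intervalIntegral_conj {f : ℝ → ℂ} {a b : ℝ} (hab : a ≤ b) :
    (∫ x in a..b, (starRingEnd ℂ) (f x)) = (starRingEnd ℂ) (∫ x in a..b, f x) := by
  rw [intervalIntegral.integral_of_le hab, intervalIntegral.integral_of_le hab, integral_conj]

def KM (ε : ℝ) : ℂ := -((starRingEnd ℂ) (KP ε))

def fmi (ε ω : ℝ) : ℂ := Complex.exp (Complex.I * (ω:ℂ)^2 / 2) / ((ω:ℂ) - Complex.I*ε)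

lemma fmi_neg (ε ω : ℝ) : fmi ε (-ω) = -((starRingEnd ℂ) (fpl ε ω)) := by
  simp only [fmi, fpl, vv]
  rw [map_div₀, ← Complex.exp_conj]
  have h1 : (starRingEnd ℂ) (-(Complex.I * (ω:ℂ)^2 / 2)) = Complex.I * (ω:ℂ)^2 / 2 := by
    simp [map_neg, map_div₀, Complex.conj_I, Complex.conj_ofReal, ← Complex.ofReal_pow, map_ofNat]
    ring
  have h2 : (starRingEnd ℂ) ((ω:ℂ) - Complex.I*ε) = (ω:ℂ) + Complex.I*ε := by
    rw [map_sub, map_mul, Complex.conj_I, Complex.conj_ofReal, Complex.conj_ofReal]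
    ring
  have h3 : (((-ω : ℝ)):ℂ) - Complex.I*ε = -((ω:ℂ) + Complex.I*ε) := by push_cast; ring
  have h4 : Complex.I * (((-ω:ℝ)):ℂ)^2 / 2 = Complex.I * (ω:ℂ)^2 / 2 := by push_cast; ring
  rw [h1, h2, h3, h4, div_neg]

lemma part_Km {ε : ℝ} (hε : 0 < ε) :
    Tendsto (fun A : ℝ => ∫ ω in (-A)..(0:ℝ), fmi ε ω) atTop (𝓝 (KM ε)) := by
  have heq : ∀ A : ℝ, 0 ≤ A → (∫ ω in (-A)..(0:ℝ), fmi ε ω)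
      = -((starRingEnd ℂ) (∫ ω in (0:ℝ)..A, fpl ε ω)) := by
    intro A hA
    have h1 : (∫ x in (0:ℝ)..A, fmi ε (-x)) = ∫ x in (-A)..(0:ℝ), fmi ε x := by
      simpa using intervalIntegral.integral_comp_neg (a := 0) (b := A) (fun x => fmi ε x)
    rw [← h1, intervalIntegral.integral_congr (g := fun x => -((starRingEnd ℂ) (fpl ε x)))
      (fun x _ => fmi_neg ε x), intervalIntegral.integral_neg, intervalIntegral_conj hA]
  have hcont : Continuous fun z : ℂ => -((starRingEnd ℂ) z) :=
    Complex.continuous_conj.neg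
  have h := (hcont.tendsto (KP ε)).comp (part_Kp hε)
  apply h.congr'
  filter_upwards [eventually_ge_atTop (0:ℝ)] with A hA
  exact (heq A hA).symm


lemma intervalIntegral_im {f : ℝ → ℂ} {a b : ℝ} (hf : IntervalIntegrable f volume a b) :
    (∫ x in a..b, f x).im = ∫ x in a..b, (f x).im := by
  rcases le_total a b with hab | hab
  · rw [intervalIntegral.integral_of_le hab, intervalIntegral.integral_of_le hab]
    exact (ContinuousLinearMap.integral_comp_comm Complex.imCLM hf.1).symm
  · rw [intervalIntegral.integral_of_ge hab, intervalIntegral.integral_of_ge hab,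
      Complex.neg_im, neg_inj]
    exact (ContinuousLinearMap.integral_comp_comm Complex.imCLM hf.2).symm

lemma fpl_im (ε ω : ℝ) : (fpl ε ω).im
    = ε * Real.cos (ω^2/2)/(ω^2+ε^2) - ω * Real.sin (ω^2/2)/(ω^2+ε^2) := by
  have hz : vv ω = Complex.exp (((-(ω^2/2) : ℝ) : ℂ) * Complex.I) := by
    rw [vv]; push_cast; ring_nf
  have hre : (vv ω).re = Real.cos (ω^2/2) := by
    rw [hz, Complex.exp_ofReal_mul_I_re, Real.cos_neg]
  have him : (vv ω).im = -Real.sin (ω^2/2) := by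
    rw [hz, Complex.exp_ofReal_mul_I_im, Real.sin_neg]
  have hwre : ((ω:ℂ) - Complex.I*ε).re = ω := by simp
  have hwim : ((ω:ℂ) - Complex.I*ε).im = -ε := by simp
  have hnsq : Complex.normSq ((ω:ℂ) - Complex.I*ε) = ω^2 + ε^2 := by
    rw [Complex.normSq_apply, hwre, hwim]; ring
  rw [fpl, Complex.div_im, hre, him, hwre, hwim, hnsq]
  ring

/-- `∫_0^∞ dx/(1+x²) = π/2`. -/
lemma integral_Ioi_one_add_sq : ∫ x in Ioi (0:ℝ), 1/(1+x^2) = π/2 := by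
  have h := integral_Ioi_of_hasDerivAt_of_nonneg' (g := arctan)
    (g' := fun x : ℝ => 1/(1+x^2)) (a := 0)
    (fun x _ => Real.hasDerivAt_arctan x) (fun x _ => by positivity)
    (Real.tendsto_arctan_atTop.mono_right nhdsWithin_le_nhds)
  simpa using h

lemma integrableOn_Ioi_one_add_sq : IntegrableOn (fun x : ℝ => 1/(1+x^2)) (Ioi 0) :=
  integrableOn_Ioi_deriv_of_nonneg' (fun x _ => Real.hasDerivAt_arctan x)
    (fun x _ => by positivity)
    (Real.tendsto_arctan_atTop.mono_right nhdsWithin_le_nhds)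

lemma hasDerivAt_arctan2 (t : ℝ) :
    HasDerivAt (fun t : ℝ => Real.arctan (2*t)/2) (1/(1+4*t^2)) t := by
  have h := ((Real.hasDerivAt_arctan (2*t)).comp t
    ((hasDerivAt_id t).const_mul 2)).div_const 2
  refine h.congr_deriv ?_
  field_simp
  ring

lemma tendsto_arctan2 : Tendsto (fun t : ℝ => Real.arctan (2*t)/2) atTop (𝓝 (π/4)) := by
  have h2 : Tendsto (fun t : ℝ => 2*t) atTop atTop :=
    (tendsto_id (α := ℝ)).const_mul_atTop two_pos
  have h := ((Real.tendsto_arctan_atTop.mono_right nhdsWithin_le_nhds).comp h2).div_const 2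
  rw [show π/2/2 = π/4 by ring] at h
  exact h

/-- `∫_0^∞ dt/(1+4t²) = π/4`. -/
lemma integral_Ioi_one_add_four_sq : ∫ t in Ioi (0:ℝ), 1/(1+4*t^2) = π/4 := by
  have h := integral_Ioi_of_hasDerivAt_of_nonneg' (g := fun t : ℝ => Real.arctan (2*t)/2)
    (g' := fun t : ℝ => 1/(1+4*t^2)) (a := 0)
    (fun t _ => hasDerivAt_arctan2 t) (fun t _ => by positivity) tendsto_arctan2
  simpa using h

lemma integrableOn_Ioi_one_add_four_sq : IntegrableOn (fun t : ℝ => 1/(1+4*t^2)) (Ioi 0) :=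
  integrableOn_Ioi_deriv_of_nonneg' (fun t _ => hasDerivAt_arctan2 t)
    (fun t _ => by positivity) tendsto_arctan2

lemma hasDerivAt_exp_neg_mul {c : ℝ} (hc : c ≠ 0) (t : ℝ) :
    HasDerivAt (fun t : ℝ => Real.exp (-(c*t))/(-c)) (Real.exp (-(c*t))) t := by
  have h1 : HasDerivAt (fun t : ℝ => -(c*t)) (-c) t := by
    have h0 := (hasDerivAt_id t).const_mul (-c)
    have he : (fun t : ℝ => -(c*t)) = (fun t : ℝ => -c * id t) := by
      funext x; simp [neg_mul]
    rw [he]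
    simpa using h0
  have h2 := (h1.exp).div_const (-c)
  refine h2.congr_deriv ?_
  field_simp

lemma tendsto_exp_neg_mul {c : ℝ} (hc : 0 < c) :
    Tendsto (fun t : ℝ => Real.exp (-(c*t))) atTop (𝓝 0) := by
  apply Real.tendsto_exp_atBot.comp
  have := (tendsto_id (α := ℝ)).const_mul_atTop_of_neg (neg_neg_iff_pos.2 hc)
  simpa [neg_mul] using this

lemma integral_exp_neg_mul {c : ℝ} (hc : 0 < c) :
    ∫ t in Ioi (0:ℝ), Real.exp (-(c*t)) = 1/c := by
  have h := integral_Ioi_of_hasDerivAt_of_nonneg'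
    (g := fun t : ℝ => Real.exp (-(c*t))/(-c)) (g' := fun t : ℝ => Real.exp (-(c*t))) (a := 0)
    (fun t _ => hasDerivAt_exp_neg_mul hc.ne' t) (fun t _ => (Real.exp_pos _).le)
    (((tendsto_exp_neg_mul hc).div_const (-c)))
  rw [h]
  simp only [mul_zero, neg_zero, Real.exp_zero, zero_div, zero_sub]
  field_simp

lemma integrableOn_exp_neg_mul {c : ℝ} (hc : 0 < c) :
    IntegrableOn (fun t : ℝ => Real.exp (-(c*t))) (Ioi (0:ℝ)) := by
  have := exp_neg_integrableOn_Ioi (0:ℝ) hc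
  apply this.congr_fun ?_ measurableSet_Ioi
  intro t _
  ring_nf


def a1 (ε ω : ℝ) : ℝ := ε * Real.cos (ω^2/2)/(ω^2+ε^2)
def a2 (ε ω : ℝ) : ℝ := ω * Real.sin (ω^2/2)/(ω^2+ε^2)

def JJ (A t : ℝ) : ℂ := (Complex.exp ((Complex.I/2 - t) * A^2) - 1)/(Complex.I - 2*t)

def Aval (ε : ℝ) : ℝ := ∫ ω in Ioi (0:ℝ), a1 ε ω
def Pval (ε : ℝ) : ℝ := ∫ t in Ioi (0:ℝ), Real.exp (-(ε^2*t)) * (1/(1+4*t^2))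

lemma continuous_a1 {ε : ℝ} (hε : ε ≠ 0) : Continuous (a1 ε) := by
  apply Continuous.div (by fun_prop) (by fun_prop)
  intro ω
  positivity

lemma continuous_a2 {ε : ℝ} (hε : ε ≠ 0) : Continuous (a2 ε) := by
  apply Continuous.div (by fun_prop) (by fun_prop)
  intro ω
  positivity

lemma cc_ne (t : ℝ) : Complex.I/2 - (t:ℂ) ≠ 0 := by
  intro h
  have := congrArg Complex.im h
  simp at this

lemma cc_re (t : ℝ) : (Complex.I/2 - (t:ℂ)).re = -t := by simp
lemma cc_im (t : ℝ) : (Complex.I/2 - (t:ℂ)).im = 1/2 := by simp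

lemma two_cc (t : ℝ) : 2*(Complex.I/2 - (t:ℂ)) = Complex.I - 2*t := by ring

lemma inner_ftc (t A : ℝ) :
    (∫ ω in (0:ℝ)..A, ω * Real.sin (ω^2/2) * Real.exp (-(ω^2*t))) = (JJ A t).im := by
  set c : ℂ := Complex.I/2 - (t:ℂ) with hc
  have hcne : c ≠ 0 := cc_ne t
  have hF : ∀ ω : ℝ, HasDerivAt (fun ω : ℝ => Complex.exp (c*(ω:ℂ)^2)/(2*c))
      ((ω:ℂ) * Complex.exp (c*(ω:ℂ)^2)) ω := by
    intro ω
    have h2 : (fun ω : ℝ => Complex.exp (c*(ω:ℂ)^2)/(2*c))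
        = fun ω : ℝ => Complex.exp (c*((ω:ℂ)*(ω:ℂ)))/(2*c) := by
      funext x; rw [sq]
    rw [h2]
    have hin : HasDerivAt (fun ω : ℝ => c*((ω:ℂ)*(ω:ℂ))) (c*((ω:ℂ)+(ω:ℂ))) ω := by
      have := ((hasDerivAt_ofReal ω).mul (hasDerivAt_ofReal ω)).const_mul c
      refine this.congr_deriv ?_
      ring
    have := (hin.cexp).div_const (2*c)
    refine this.congr_deriv ?_
    rw [sq]
    field_simp
    ring
  have hInt : (∫ ω in (0:ℝ)..A, (ω:ℂ) * Complex.exp (c*(ω:ℂ)^2))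
      = (Complex.exp (c*(A:ℂ)^2) - 1)/(2*c) := by
    rw [intervalIntegral.integral_eq_sub_of_hasDerivAt (fun x _ => hF x)
      (Continuous.intervalIntegrable (by fun_prop) 0 A)]
    push_cast
    field_simp
    simp
  have him : ∀ ω : ℝ, ((ω:ℂ) * Complex.exp (c*(ω:ℂ)^2)).im
      = ω * Real.sin (ω^2/2) * Real.exp (-(ω^2*t)) := by
    intro ω
    have hre : (c*(ω:ℂ)^2).re = -(ω^2*t) := by
      rw [hc, Complex.mul_re, ← Complex.ofReal_pow, Complex.ofReal_re, Complex.ofReal_im,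
        cc_re, cc_im]
      ring
    have him2 : (c*(ω:ℂ)^2).im = ω^2/2 := by
      rw [hc, Complex.mul_im, ← Complex.ofReal_pow, Complex.ofReal_re, Complex.ofReal_im,
        cc_re, cc_im]
      ring
    rw [Complex.mul_im, Complex.ofReal_re, Complex.ofReal_im, Complex.exp_im, hre, him2]
    ring
  have hleft : (∫ ω in (0:ℝ)..A, ω * Real.sin (ω^2/2) * Real.exp (-(ω^2*t)))
      = (∫ ω in (0:ℝ)..A, (ω:ℂ) * Complex.exp (c*(ω:ℂ)^2)).im := by
    rw [intervalIntegral_im (Continuous.intervalIntegrable (by fun_prop) 0 A)]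
    exact (intervalIntegral.integral_congr (fun x _ => (him x).symm))
  rw [hleft, hInt, JJ, ← two_cc]

lemma fubini_a2 {ε : ℝ} (hε : 0 < ε) {A : ℝ} (hA : 0 < A) :
    (∫ ω in (0:ℝ)..A, a2 ε ω)
      = ∫ t in Ioi (0:ℝ), Real.exp (-(ε^2*t)) * (JJ A t).im := by
  have hpos : ∀ ω : ℝ, 0 < ω^2 + ε^2 := fun ω => by positivity
  have hrep : ∀ ω : ℝ, a2 ε ω
      = ∫ t in Ioi (0:ℝ), (ω * Real.sin (ω^2/2)) * Real.exp (-((ω^2+ε^2)*t)) := by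
    intro ω
    rw [integral_const_mul, integral_exp_neg_mul (hpos ω), a2]
    field_simp
  rw [intervalIntegral.integral_of_le hA.le]
  rw [setIntegral_congr_fun measurableSet_Ioc (fun ω _ => hrep ω)]
  have hswap := integral_integral_swap
    (f := fun ω t => (ω * Real.sin (ω^2/2)) * Real.exp (-((ω^2+ε^2)*t)))
    (μ := volume.restrict (Ioc 0 A)) (ν := volume.restrict (Ioi 0)) ?_
  · rw [hswap]
    apply setIntegral_congr_fun measurableSet_Ioi
    intro t ht
    have hsplit : ∀ ω : ℝ, Real.exp (-((ω^2+ε^2)*t))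
        = Real.exp (-(ω^2*t)) * Real.exp (-(ε^2*t)) := by
      intro ω
      rw [← Real.exp_add]
      congr 1
      ring
    calc (∫ ω in Ioc (0:ℝ) A, (ω * Real.sin (ω^2/2)) * Real.exp (-((ω^2+ε^2)*t)))
        = ∫ ω in Ioc (0:ℝ) A, (ω * Real.sin (ω^2/2) * Real.exp (-(ω^2*t)))
            * Real.exp (-(ε^2*t)) := by
          apply setIntegral_congr_fun measurableSet_Ioc
          intro ω _
          simp only
          rw [hsplit]
          ring
      _ = (∫ ω in Ioc (0:ℝ) A, ω * Real.sin (ω^2/2) * Real.exp (-(ω^2*t)))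
            * Real.exp (-(ε^2*t)) := integral_mul_const _ _
      _ = Real.exp (-(ε^2*t)) * (JJ A t).im := by
          rw [← intervalIntegral.integral_of_le hA.le, inner_ftc]
          ring
  · -- integrability on the product
    apply Integrable.mono' (g := fun p : ℝ × ℝ => A * Real.exp (-(ε^2 * p.2)))
    · exact Integrable.mul_prod (integrableOn_const (C := A) measure_Ioc_lt_top.ne)
        (integrableOn_exp_neg_mul (by positivity))
    · apply Continuous.aestronglyMeasurable
      fun_prop
    · rw [Measure.prod_restrict, ae_restrict_iff' (measurableSet_Ioc.prod measurableSet_Ioi)]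
      apply Eventually.of_forall
      rintro ⟨ω, t⟩ ⟨hω, ht⟩
      simp only [Function.uncurry, Real.norm_eq_abs]
      have hsin : |Real.sin (ω^2/2)| ≤ 1 := Real.abs_sin_le_one _
      have hωA : |ω| ≤ A := by rw [abs_of_pos hω.1]; exact hω.2
      have h2 : |Real.exp (-((ω^2+ε^2)*t))| ≤ Real.exp (-(ε^2*t)) := by
        rw [abs_of_pos (Real.exp_pos _)]
        apply Real.exp_le_exp.2
        have ht' : (0:ℝ) ≤ t := le_of_lt ht
        nlinarith [sq_nonneg ω]
      have h1 : |ω * Real.sin (ω^2/2)| ≤ A := by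
        rw [abs_mul]
        nlinarith [abs_nonneg ω, abs_nonneg (Real.sin (ω^2/2))]
      calc |ω * Real.sin (ω^2/2) * Real.exp (-((ω^2+ε^2)*t))|
          = |ω * Real.sin (ω^2/2)| * |Real.exp (-((ω^2+ε^2)*t))| := abs_mul _ _
        _ ≤ A * Real.exp (-(ε^2*t)) := mul_le_mul h1 h2 (abs_nonneg _) hA.le


lemma Idenom_ne (t : ℝ) : Complex.I - 2*(t:ℂ) ≠ 0 := by
  intro h
  have := congrArg Complex.im h
  simp at this

lemma continuous_JJ (A : ℝ) : Continuous (fun t : ℝ => JJ A t) := by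
  apply Continuous.div
  · apply Continuous.sub _ continuous_const
    apply Complex.continuous_exp.comp
    fun_prop
  · fun_prop
  · exact fun t => Idenom_ne t

lemma ccA_re (t A : ℝ) : ((Complex.I/2 - (t:ℂ)) * (A:ℂ)^2).re = -(A^2*t) := by
  rw [Complex.mul_re, ← Complex.ofReal_pow, Complex.ofReal_re, Complex.ofReal_im, cc_re, cc_im]
  ring

lemma norm_Idenom_ge (t : ℝ) : 1 ≤ ‖Complex.I - 2*(t:ℂ)‖ := by
  have h := Complex.abs_im_le_norm (Complex.I - 2*(t:ℂ))
  have him : (Complex.I - 2*(t:ℂ)).im = 1 := by simp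
  rw [him] at h
  simpa using h

lemma norm_JJ_le {t : ℝ} (ht : 0 ≤ t) (A : ℝ) : ‖JJ A t‖ ≤ 2 := by
  rw [JJ, norm_div]
  have hn1 : ‖Complex.exp ((Complex.I/2 - (t:ℂ)) * (A:ℂ)^2)‖ ≤ 1 := by
    rw [Complex.norm_exp, ccA_re]
    apply Real.exp_le_one_iff.mpr
    nlinarith [sq_nonneg A]
  have hnum : ‖Complex.exp ((Complex.I/2 - (t:ℂ)) * (A:ℂ)^2) - 1‖ ≤ 2 := by
    have h := norm_sub_le (Complex.exp ((Complex.I/2 - (t:ℂ)) * (A:ℂ)^2)) 1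
    rw [norm_one] at h
    linarith
  have hden := norm_Idenom_ge t
  have hdenpos : (0:ℝ) < ‖Complex.I - 2*(t:ℂ)‖ := lt_of_lt_of_le one_pos hden
  rw [div_le_iff₀ hdenpos]
  nlinarith [norm_nonneg (Complex.exp ((Complex.I/2 - (t:ℂ)) * (A:ℂ)^2) - 1)]

lemma tendsto_JJ_im {t : ℝ} (ht : 0 < t) :
    Tendsto (fun A : ℝ => (JJ A t).im) atTop (𝓝 (1/(1+4*t^2))) := by
  have hexp : Tendsto (fun A : ℝ => Complex.exp ((Complex.I/2 - (t:ℂ)) * (A:ℂ)^2)) atTop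
      (𝓝 0) := by
    rw [tendsto_zero_iff_norm_tendsto_zero]
    have heq : ∀ A : ℝ, ‖Complex.exp ((Complex.I/2 - (t:ℂ)) * (A:ℂ)^2)‖
        = Real.exp (A^2 * (-t)) := by
      intro A
      rw [Complex.norm_exp, ccA_re]
      congr 1
      ring
    have hbot : Tendsto (fun A : ℝ => A^2 * (-t)) atTop atBot :=
      (tendsto_pow_atTop (two_ne_zero)).atTop_mul_const_of_neg (by linarith)
    have := Real.tendsto_exp_atBot.comp hbot
    exact this.congr (fun A => (heq A).symm)
  have hJJ : Tendsto (fun A : ℝ => JJ A t) atTop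
      (𝓝 ((0 - 1)/(Complex.I - 2*(t:ℂ)))) := by
    exact ((hexp.sub_const 1).div_const _)
  have hval : (((0:ℂ) - 1)/(Complex.I - 2*(t:ℂ))).im = 1/(1+4*t^2) := by
    rw [Complex.div_im]
    have h1 : Complex.normSq (Complex.I - 2*(t:ℂ)) = 1+4*t^2 := by
      rw [Complex.normSq_apply]
      simp
      ring
    rw [h1]
    simp
    field_simp
  rw [← hval]
  exact (Complex.continuous_im.tendsto _).comp hJJ

lemma tendsto_S {ε : ℝ} (hε : 0 < ε) :
    Tendsto (fun A : ℝ => ∫ ω in (0:ℝ)..A, a2 ε ω) atTop (𝓝 (Pval ε)) := by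
  have hD : Tendsto (fun A : ℝ => ∫ t in Ioi (0:ℝ), Real.exp (-(ε^2*t)) * (JJ A t).im)
      atTop (𝓝 (Pval ε)) := by
    rw [Pval]
    apply tendsto_integral_filter_of_dominated_convergence
      (bound := fun t : ℝ => 2 * Real.exp (-(ε^2*t)))
    · apply Eventually.of_forall
      intro A
      apply Continuous.aestronglyMeasurable
      exact (by fun_prop : Continuous fun t : ℝ => Real.exp (-(ε^2*t))).mul
        (Complex.continuous_im.comp (continuous_JJ A))
    · apply Eventually.of_forall
      intro A
      rw [ae_restrict_iff' measurableSet_Ioi]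
      apply Eventually.of_forall
      intro t ht
      rw [Real.norm_eq_abs, abs_mul, abs_of_pos (Real.exp_pos _)]
      have him : |(JJ A t).im| ≤ 2 := by
        have h1 := Complex.abs_im_le_norm (JJ A t)
        exact h1.trans (norm_JJ_le (le_of_lt ht) A)
      nlinarith [Real.exp_pos (-(ε^2*t))]
    · exact (integrableOn_exp_neg_mul (by positivity)).const_mul 2
    · rw [ae_restrict_iff' measurableSet_Ioi]
      apply Eventually.of_forall
      intro t ht
      exact (tendsto_JJ_im ht).const_mul _
  apply hD.congr'
  filter_upwards [eventually_gt_atTop (0:ℝ)] with A hA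
  exact (fubini_a2 hε hA).symm

lemma hasDerivAt_arctan_div {ε : ℝ} (hε : 0 < ε) (x : ℝ) :
    HasDerivAt (fun x : ℝ => Real.arctan (x/ε)) (ε/(x^2+ε^2)) x := by
  have h := (Real.hasDerivAt_arctan (x/ε)).comp x ((hasDerivAt_id x).div_const ε)
  refine h.congr_deriv ?_
  have h1 : (0:ℝ) < x^2 + ε^2 := by positivity
  have h2 : (0:ℝ) < 1 + (x/ε)^2 := by positivity
  field_simp
  ring

lemma tendsto_arctan_div {ε : ℝ} (hε : 0 < ε) :
    Tendsto (fun x : ℝ => Real.arctan (x/ε)) atTop (𝓝 (π/2)) :=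
  (Real.tendsto_arctan_atTop.mono_right nhdsWithin_le_nhds).comp
    (tendsto_id.atTop_div_const hε)

lemma integrableOn_eps_div {ε : ℝ} (hε : 0 < ε) :
    IntegrableOn (fun x : ℝ => ε/(x^2+ε^2)) (Ioi (0:ℝ)) :=
  integrableOn_Ioi_deriv_of_nonneg' (fun x _ => hasDerivAt_arctan_div hε x)
    (fun x _ => by positivity) (tendsto_arctan_div hε)

lemma integrableOn_a1 {ε : ℝ} (hε : 0 < ε) : IntegrableOn (a1 ε) (Ioi (0:ℝ)) := by
  apply Integrable.mono' (integrableOn_eps_div hε)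
    ((continuous_a1 hε.ne').aestronglyMeasurable)
  apply Eventually.of_forall
  intro ω
  rw [Real.norm_eq_abs, a1, abs_div, abs_of_pos (by positivity : (0:ℝ) < ω^2+ε^2)]
  have h1 : |ε * Real.cos (ω^2/2)| ≤ ε := by
    rw [abs_mul, abs_of_pos hε]
    nlinarith [Real.abs_cos_le_one (ω^2/2), abs_nonneg (Real.cos (ω^2/2))]
  gcongr

lemma tendsto_Aint {ε : ℝ} (hε : 0 < ε) :
    Tendsto (fun A : ℝ => ∫ ω in (0:ℝ)..A, a1 ε ω) atTop (𝓝 (Aval ε)) :=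
  intervalIntegral_tendsto_integral_Ioi 0 (integrableOn_a1 hε) tendsto_id

lemma im_KP {ε : ℝ} (hε : 0 < ε) : (KP ε).im = Aval ε - Pval ε := by
  have h1 : Tendsto (fun A : ℝ => (∫ ω in (0:ℝ)..A, fpl ε ω).im) atTop (𝓝 ((KP ε).im)) :=
    (Complex.continuous_im.tendsto _).comp (part_Kp hε)
  have h2 : ∀ A : ℝ, (∫ ω in (0:ℝ)..A, fpl ε ω).im
      = (∫ ω in (0:ℝ)..A, a1 ε ω) - ∫ ω in (0:ℝ)..A, a2 ε ω := by
    intro A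
    rw [intervalIntegral_im ((continuous_fpl hε.ne').intervalIntegrable 0 A),
      ← intervalIntegral.integral_sub ((continuous_a1 hε.ne').intervalIntegrable 0 A)
        ((continuous_a2 hε.ne').intervalIntegrable 0 A)]
    apply intervalIntegral.integral_congr
    intro x _
    show (fpl ε x).im = a1 ε x - a2 ε x
    rw [fpl_im, a1, a2]
  have h3 := (tendsto_Aint hε).sub (tendsto_S hε)
  exact tendsto_nhds_unique (h1.congr h2) h3

lemma Aval_eq {ε : ℝ} (hε : 0 < ε) :
    Aval ε = ∫ x in Ioi (0:ℝ), Real.cos (ε^2*x^2/2) * (1/(1+x^2)) := by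
  have h := integral_comp_mul_left_Ioi (g := a1 ε) 0 hε
  rw [mul_zero] at h
  have h2 : Aval ε = ε • ∫ x in Ioi (0:ℝ), a1 ε (ε * x) := by
    rw [h, smul_smul, mul_inv_cancel₀ hε.ne', one_smul, Aval]
  rw [h2, smul_eq_mul, ← integral_const_mul]
  apply setIntegral_congr_fun measurableSet_Ioi
  intro x _
  simp only [a1]
  rw [mul_pow]
  have d1 : ε^2*x^2+ε^2 ≠ 0 := by positivity
  have d2 : (1:ℝ)+x^2 ≠ 0 := by positivity
  field_simp
  ring

lemma tendsto_Aval : Tendsto Aval (𝓝[>](0:ℝ)) (𝓝 (π/2)) := by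
  have hQ : Tendsto (fun ε : ℝ => ∫ x in Ioi (0:ℝ), Real.cos (ε^2*x^2/2) * (1/(1+x^2)))
      (𝓝[>](0:ℝ)) (𝓝 (π/2)) := by
    rw [← integral_Ioi_one_add_sq]
    apply tendsto_integral_filter_of_dominated_convergence (bound := fun x : ℝ => 1/(1+x^2))
    · apply Eventually.of_forall
      intro ε
      apply Continuous.aestronglyMeasurable
      apply Continuous.mul (by fun_prop)
      apply Continuous.div continuous_const (by fun_prop)
      intro x
      positivity
    · apply Eventually.of_forall
      intro ε
      apply Eventually.of_forall
      intro x
      rw [Real.norm_eq_abs, abs_mul]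
      have h1 : (0:ℝ) < 1 + x^2 := by positivity
      have h2 : |1/(1+x^2)| = 1/(1+x^2) := abs_of_pos (by positivity)
      rw [h2]
      calc |Real.cos (ε^2*x^2/2)| * (1/(1+x^2)) ≤ 1 * (1/(1+x^2)) :=
            mul_le_mul_of_nonneg_right (Real.abs_cos_le_one _) (by positivity)
        _ = 1/(1+x^2) := one_mul _
    · exact integrableOn_Ioi_one_add_sq
    · apply Eventually.of_forall
      intro x
      have hc : Tendsto (fun ε : ℝ => Real.cos (ε^2*x^2/2)) (𝓝[>](0:ℝ)) (𝓝 1) := by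
        have h := ((Real.continuous_cos.comp (by fun_prop :
          Continuous fun ε : ℝ => ε^2*x^2/2)).tendsto 0).mono_left
          (nhdsWithin_le_nhds (s := Set.Ioi (0:ℝ)))
        simpa [Function.comp_def] using h
      have := hc.mul_const (1/(1+x^2))
      rw [one_mul] at this
      exact this
  apply hQ.congr'
  filter_upwards [self_mem_nhdsWithin] with ε hε
  exact (Aval_eq hε).symm

lemma tendsto_Pval : Tendsto Pval (𝓝[>](0:ℝ)) (𝓝 (π/4)) := by
  have h4 : (π/4 : ℝ) = ∫ t in Ioi (0:ℝ), 1/(1+4*t^2) := integral_Ioi_one_add_four_sq.symm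
  rw [h4]
  show Tendsto (fun ε : ℝ => ∫ t in Ioi (0:ℝ), Real.exp (-(ε^2*t)) * (1/(1+4*t^2)))
    (𝓝[>](0:ℝ)) (𝓝 (∫ t in Ioi (0:ℝ), 1/(1+4*t^2)))
  apply tendsto_integral_filter_of_dominated_convergence (bound := fun t : ℝ => 1/(1+4*t^2))
  · apply Eventually.of_forall
    intro ε
    apply Continuous.aestronglyMeasurable
    apply Continuous.mul (by fun_prop)
    apply Continuous.div continuous_const (by fun_prop)
    intro t
    positivity
  · apply Eventually.of_forall
    intro ε
    rw [ae_restrict_iff' measurableSet_Ioi]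
    apply Eventually.of_forall
    intro t ht
    rw [Real.norm_eq_abs, abs_mul]
    have h2 : |1/(1+4*t^2)| = 1/(1+4*t^2) := abs_of_pos (by positivity)
    rw [h2, abs_of_pos (Real.exp_pos _)]
    have h3 : Real.exp (-(ε^2*t)) ≤ 1 := by
      apply Real.exp_le_one_iff.mpr
      have ht' : (0:ℝ) < t := ht
      nlinarith [sq_nonneg ε]
    nlinarith [Real.exp_pos (-(ε^2*t)), (by positivity : (0:ℝ) < 1/(1+4*t^2))]
  · exact integrableOn_Ioi_one_add_four_sq
  · rw [ae_restrict_iff' measurableSet_Ioi]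
    apply Eventually.of_forall
    intro t ht
    have hc : Tendsto (fun ε : ℝ => Real.exp (-(ε^2*t))) (𝓝[>](0:ℝ)) (𝓝 1) := by
      have h := ((Real.continuous_exp.comp (by fun_prop :
        Continuous fun ε : ℝ => -(ε^2*t))).tendsto 0).mono_left
        (nhdsWithin_le_nhds (s := Set.Ioi (0:ℝ)))
      simpa [Function.comp_def] using h
    have := hc.mul_const (1/(1+4*t^2))
    rw [one_mul] at this
    exact this

lemma tendsto_im_KP : Tendsto (fun ε : ℝ => (KP ε).im) (𝓝[>](0:ℝ)) (𝓝 (π/4)) := by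
  have h := tendsto_Aval.sub tendsto_Pval
  rw [show π/2 - π/4 = π/4 by ring] at h
  apply h.congr'
  filter_upwards [self_mem_nhdsWithin] with ε hε
  exact (im_KP hε).symm

end FresnelAux

/-- For every `ε > 0` the improper integrals
`K₋(ε) = ∫_{−∞}^0 e^{iω²/2}/(ω − iε) dω` and `K₊(ε) = ∫_0^∞ e^{−iω²/2}/(ω − iε) dω`
exist as limits of integrals over bounded intervals, and
`K₋(ε) + K₊(ε) → iπ/2` as `ε → 0⁺`. -/
theorem fresnel_sum_half :
    ∃ Km Kp : ℝ → ℂ,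
      (∀ ε : ℝ, 0 < ε →
        Tendsto
          (fun A : ℝ => ∫ ω in (-A)..(0:ℝ),
            Complex.exp (Complex.I * (ω : ℂ) ^ 2 / 2) / ((ω : ℂ) - Complex.I * ε))
          atTop (nhds (Km ε))) ∧
      (∀ ε : ℝ, 0 < ε →
        Tendsto
          (fun A : ℝ => ∫ ω in (0:ℝ)..A,
            Complex.exp (-(Complex.I * (ω : ℂ) ^ 2 / 2)) / ((ω : ℂ) - Complex.I * ε))
          atTop (nhds (Kp ε))) ∧
      Tendsto (fun ε : ℝ => Km ε + Kp ε) (nhdsWithin 0 (Set.Ioi 0))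
        (nhds (Complex.I * Real.pi / 2)) := by
  refine ⟨KM, KP, fun ε hε => part_Km hε, fun ε hε => part_Kp hε, ?_⟩
  have him := tendsto_im_KP
  have h2 := (Complex.continuous_ofReal.tendsto _).comp (him.const_mul 2)
  have h3 := h2.mul_const Complex.I
  have h4 : ((2 * (π/4) : ℝ) : ℂ) * Complex.I = Complex.I * Real.pi / 2 := by
    push_cast; ring
  rw [h4] at h3
  apply h3.congr
  intro ε
  show ((2 * (KP ε).im : ℝ) : ℂ) * Complex.I = -((starRingEnd ℂ) (KP ε)) + KP ε
  rw [← Complex.sub_conj]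
  ring
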